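/- Let P be a finite poset with at least one element, M a maximal chain of P with |M| = m, and X = P \ M with |X| = k. Then the number of maximal chains of P is at most 2^k. -/

import Mathlib

open scoped Classical in
/-- The finite set of maximal chains of a finite poset, as finsets. -/
noncomputable def maxChains (α : Type*) [Fintype α] [PartialOrder α] : Finset (Finset α) :=
  Finset.univ.filter (fun s : Finset α => IsMaxChain (· ≤ ·) (s : Set α))

/-- The multiset of cardinalities of the maximal chains of a finite poset. -/
noncomputable def mcMultiset (α : Type*) [Fintype α] [PartialOrder α] : Multiset ℕ :=
  (maxChains α).val.map Finset.card

open scoped Classical in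
/-- If two maximal chains have the same part outside a maximal chain `M`,
then one is contained in the other. -/
lemma maxchain_sdiff_subset {α : Type*} [PartialOrder α] (M s t : Finset α)
    (hM : IsMaxChain (· ≤ ·) (M : Set α)) (hs : IsMaxChain (· ≤ ·) (s : Set α))
    (ht : IsMaxChain (· ≤ ·) (t : Set α)) (h : s \ M = t \ M) : s ⊆ t := by
  intro a ha
  by_cases haM : a ∈ M
  · by_contra hat
    have hnotchain : ¬ IsChain (· ≤ ·) (insert a (t : Set α)) := by
      intro hc
      have := ht.2 hc (Set.subset_insert _ _)
      exact hat (by rw [← Finset.mem_coe, this]; exact Set.mem_insert _ _)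
    have hex : ¬ ∀ b ∈ (t : Set α), a ≠ b → a ≤ b ∨ b ≤ a :=
      fun hall => hnotchain (ht.1.insert hall)
    push_neg at hex
    obtain ⟨b, hbt, hab, hnc⟩ := hex
    have hbM : b ∉ M := by
      intro hbM
      exact (hM.1 haM hbM hab).elim hnc.1 hnc.2
    have hbs : b ∈ s := by
      have : b ∈ t \ M := Finset.mem_sdiff.mpr ⟨hbt, hbM⟩
      rw [← h] at this
      exact (Finset.mem_sdiff.mp this).1
    exact (hs.1 (by exact ha) (by exact hbs) hab).elim hnc.1 hnc.2
  · have : a ∈ s \ M := Finset.mem_sdiff.mpr ⟨ha, haM⟩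
    rw [h] at this
    exact (Finset.mem_sdiff.mp this).1

open scoped Classical in
theorem num_maximal_chains_le_pow {α : Type*} [Fintype α] [PartialOrder α] [Nonempty α]
    (M : Finset α) (hM : IsMaxChain (· ≤ ·) (M : Set α)) :
    (maxChains α).card ≤ 2 ^ (Finset.univ \ M).card := by
  rw [← Finset.card_powerset]
  apply Finset.card_le_card_of_injOn (fun s => s \ M)
  · intro s _
    simp only [Finset.mem_coe, Finset.mem_powerset]
    intro x hx
    simp only [Finset.mem_sdiff] at hx ⊢
    exact ⟨Finset.mem_univ _, hx.2⟩
  · intro s hsm t htm hst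
    simp only [maxChains, Finset.mem_coe, Finset.mem_filter] at hsm htm
    exact le_antisymm (maxchain_sdiff_subset M s t hM hsm.2 htm.2 hst)
      (maxchain_sdiff_subset M t s hM htm.2 hsm.2 hst.symm)
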